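/- Let T be a well-pruned nonspecial ω₁-tree. Then ◊* implies ◊_T. -/

import Mathlib

open Set

/-- The first uncountable ordinal `ω₁`. -/
noncomputable def omega1 : Ordinal := Ordinal.omega 1

section TreeDefs

variable {T : Type*} [PartialOrder T]

/-- In a tree, the set of strict predecessors of any node is linearly ordered. -/
def PredsChain (T : Type*) [PartialOrder T] : Prop :=
  ∀ t : T, IsChain (· ≤ ·) {s : T | s < t}

/-- `ht` is *the* height function of the tree: it is strictly monotone on comparable pairs and
the heights of the strict predecessors of `t` are exactly the ordinals below `ht t`; together
with `PredsChain` this says that the set `t↓` of strict predecessors of `t` is well-ordered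
with order type `ht t`. -/
def IsHeightFun (ht : T → Ordinal) : Prop :=
  (∀ s t : T, s < t → ht s < ht t) ∧
  ∀ t : T, ∀ o : Ordinal, o < ht t → ∃ s : T, s < t ∧ ht s = o

/-- The tree has height `ω₁`: every node has height `< ω₁` and every countable ordinal is the
height of some node. -/
def HeightOmega1 (ht : T → Ordinal) : Prop :=
  (∀ t : T, ht t < omega1) ∧ ∀ o : Ordinal, o < omega1 → ∃ t : T, ht t = o

/-- All levels of the tree are countable. -/
def CountableLevels (ht : T → Ordinal) : Prop :=
  ∀ o : Ordinal, {t : T | ht t = o}.Countable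

/-- A tree of height `ω₁` is well-pruned if every node has successors in all later levels. -/
def WellPruned (ht : T → Ordinal) : Prop :=
  ∀ o o' : Ordinal, o < o' → o' < omega1 →
    ∀ s : T, ht s = o → ∃ t : T, s < t ∧ ht t = o'

/-- A special subset of a tree: a union of countably many antichains. -/
def IsSpecialSet (U : Set T) : Prop :=
  ∃ A : ℕ → Set T, (∀ n : ℕ, IsAntichain (· ≤ ·) (A n)) ∧ U ⊆ ⋃ n, A n

/-- Membership in the ideal `NS^T`: there is a regressive map on `B` all of whose fibers
are special. -/
def InNS [OrderBot T] (B : Set T) : Prop :=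
  ∃ f : T → T, (∀ t ∈ B, t ≠ ⊥ → f t < t) ∧
    ∀ t : T, IsSpecialSet {s : T | s ∈ B ∧ f s = t}

/-- The diamond principle `◊_T` for a tree `T`. -/
def DiamondTree (T : Type*) [PartialOrder T] [OrderBot T] : Prop :=
  ∃ D : T → Set T, (∀ t : T, D t ⊆ Set.Iio t) ∧
    ∀ X : Set T, ¬ InNS {t : T | X ∩ Set.Iio t = D t}

end TreeDefs

/-- Club subsets of `ω₁`: closed and unbounded in `ω₁`. -/
def IsClubIn (C : Set Ordinal) : Prop :=
  C ⊆ Set.Iio omega1 ∧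
  (∀ o : Ordinal, o < omega1 → ∃ b ∈ C, o < b) ∧
  ∀ o : Ordinal, o < omega1 → (C ∩ Set.Iio o).Nonempty →
    IsLUB (C ∩ Set.Iio o) o → o ∈ C

/-- Stationary subsets of `ω₁`: sets meeting every club. -/
def IsStationaryIn (S : Set Ordinal) : Prop :=
  ∀ C : Set Ordinal, IsClubIn C → (S ∩ C).Nonempty

/-- The diamond principle `◊(S)` for `S ⊆ ω₁`;  `◊` is `DiamondOn (Set.Iio omega1)`. -/
def DiamondOn (S : Set Ordinal) : Prop :=
  ∃ D : Ordinal → Set Ordinal, (∀ o ∈ S, D o ⊆ Set.Iio o) ∧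
    ∀ X : Set Ordinal, X ⊆ Set.Iio omega1 →
      IsStationaryIn {o ∈ S | X ∩ Set.Iio o = D o}

/-- The principle `◊*`: a sequence of countable families `𝒟_α` of subsets of `α` such that
every `X ⊆ ω₁` satisfies `X ∩ α ∈ 𝒟_α` on a club of `α < ω₁`. -/
def DiamondStar : Prop :=
  ∃ D : Ordinal.{0} → Set (Set Ordinal.{0}),
    (∀ o : Ordinal, o < omega1 → (∀ A ∈ D o, A ⊆ Set.Iio o) ∧ (D o).Countable) ∧
    ∀ X : Set Ordinal, X ⊆ Set.Iio omega1 →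
      ∃ C : Set Ordinal, IsClubIn C ∧ ∀ o ∈ C, X ∩ Set.Iio o ∈ D o


/-! ### Auxiliary machinery -/

section DiamondAux

open Ordinal Cardinal

universe u v

private lemma omega1_eq_ord : (omega1 : Ordinal.{v}) = (Cardinal.aleph 1).ord :=
  (Cardinal.ord_aleph 1).symm

private lemma lift_omega1' : Ordinal.lift.{v,0} omega1 = (omega1 : Ordinal.{v}) := by
  unfold omega1
  rw [Ordinal.lift_omega, Ordinal.lift_one]

private lemma card_le_of_lt_omega1 {o : Ordinal.{v}} (h : o < omega1) : o.card ≤ ℵ₀ := by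
  rw [omega1_eq_ord, Cardinal.lt_ord] at h
  rwa [← Cardinal.succ_aleph0, Order.lt_succ_iff] at h

private lemma lt_omega1_of_card_le {o : Ordinal.{v}} (h : o.card ≤ ℵ₀) : o < omega1 := by
  rw [omega1_eq_ord, Cardinal.lt_ord]
  exact h.trans_lt Cardinal.aleph0_lt_aleph_one

private lemma omega1_pos : (0 : Ordinal.{v}) < omega1 :=
  lt_omega1_of_card_le (by simp)

private lemma succ_lt_omega1' {o : Ordinal.{v}} (h : o < omega1) : o + 1 < omega1 := by
  apply lt_omega1_of_card_le
  rw [Ordinal.card_add, Ordinal.card_one]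
  exact (add_le_add (card_le_of_lt_omega1 h) Cardinal.one_le_aleph0).trans
    Cardinal.aleph0_add_aleph0.le

private lemma omegaMulAdd_lt_omega1 {o : Ordinal.{v}} (h : o < omega1) (n : ℕ) :
    Ordinal.omega0 * o + n < omega1 := by
  apply lt_omega1_of_card_le
  rw [Ordinal.card_add, Ordinal.card_mul, Ordinal.card_omega0, Ordinal.card_nat]
  refine (add_le_add ?_ (Cardinal.nat_lt_aleph0 n).le).trans Cardinal.aleph0_add_aleph0.le
  exact (mul_le_mul' le_rfl (card_le_of_lt_omega1 h)).trans Cardinal.aleph0_mul_aleph0.le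

private lemma countable_Iio_of_lt_omega1 {o : Ordinal.{0}} (h : o < omega1) :
    (Set.Iio o).Countable := by
  rw [← Cardinal.le_aleph0_iff_set_countable, Ordinal.mk_Iio_ordinal]
  have h2 : Cardinal.lift.{1,0} o.card ≤ Cardinal.lift.{1,0} ℵ₀ := by
    rw [Cardinal.lift_le]
    exact card_le_of_lt_omega1 h
  simpa using h2

private lemma iSup_lt_omega1' (x : ℕ → Ordinal.{0}) (h : ∀ n, x n < omega1) :
    iSup x < omega1 := by
  rw [omega1_eq_ord]
  rw [← omega1_eq_ord]; exact Ordinal.iSup_lt_omega_one h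

private lemma ord_lt_add_one (a : Ordinal.{v}) : a < a + 1 := by
  rw [Ordinal.add_one_eq_succ]
  exact Order.lt_succ a

private lemma ord_add_one_le {a b : Ordinal.{v}} (h : a < b) : a + 1 ≤ b := by
  rw [Ordinal.add_one_eq_succ]
  exact Order.succ_le_of_lt h

private lemma omegaMulAdd_inj {a b : Ordinal.{0}} {p p' : ℕ}
    (h : Ordinal.omega0 * a + p = Ordinal.omega0 * b + p') : a = b ∧ p = p' := by
  have key : ∀ {x y : Ordinal.{0}} {r r' : ℕ}, x < y →
      Ordinal.omega0 * x + r ≠ Ordinal.omega0 * y + r' := by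
    intro x y r r' hxy heq
    have h1 : Ordinal.omega0 * x + (r : Ordinal) < Ordinal.omega0 * y := by
      calc Ordinal.omega0 * x + (r : Ordinal)
          < Ordinal.omega0 * x + Ordinal.omega0 :=
            add_lt_add_right (Ordinal.nat_lt_omega0 r) _
        _ = Ordinal.omega0 * (x + 1) := by
            rw [Ordinal.add_one_eq_succ, Ordinal.mul_succ]
        _ ≤ Ordinal.omega0 * y := mul_le_mul_right (ord_add_one_le hxy) _
    rw [heq] at h1
    exact absurd h1 (not_lt.mpr le_self_add)
  have hab : a = b := by
    rcases lt_trichotomy a b with hb | hb | hb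
    · exact absurd h (key hb)
    · exact hb
    · exact absurd h.symm (key hb)
  subst hab
  refine ⟨rfl, ?_⟩
  have := (add_right_inj (Ordinal.omega0 * a)).mp h
  exact_mod_cast this

/-! ### Club lemmas -/

private lemma mem_club_of_cofinal {C : Set Ordinal.{0}} (hC : IsClubIn C) {α : Ordinal.{0}}
    (hα : α < omega1) (h0 : ∃ c ∈ C, c < α) (h : ∀ β, β < α → ∃ c ∈ C, β < c ∧ c < α) :
    α ∈ C := by
  obtain ⟨c0, hc0C, hc0⟩ := h0
  refine hC.2.2 α hα ⟨c0, hc0C, hc0⟩ ⟨fun z hz => le_of_lt hz.2, fun b hb => ?_⟩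
  by_contra hba
  push_neg at hba
  obtain ⟨c, hcC, hbc, hcα⟩ := h b hba
  exact absurd (hb ⟨hcC, hcα⟩) (not_le.mpr hbc)

private lemma sup_seq_facts (x : ℕ → Ordinal.{0}) (hlt : ∀ n, x n < omega1)
    (hs : ∀ n, x n < x (n+1)) :
    iSup x < omega1 ∧ (∀ n, x n < iSup x) ∧ (∀ β, β < iSup x → ∃ n, β < x n) := by
  have hbdd : BddAbove (Set.range x) := ⟨omega1, by rintro _ ⟨n, rfl⟩; exact (hlt n).le⟩
  have hle : ∀ n, x n ≤ iSup x := fun n => le_ciSup hbdd n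
  exact ⟨iSup_lt_omega1' x hlt, fun n => (hs n).trans_le (hle (n+1)),
    fun β hβ => exists_lt_of_lt_ciSup hβ⟩

private lemma isClubIn_inter {C D : Set Ordinal.{0}} (hC : IsClubIn C) (hD : IsClubIn D) :
    IsClubIn (C ∩ D) := by
  refine ⟨fun x hx => hC.1 hx.1, ?_, ?_⟩
  · intro o ho
    have step : ∀ β : Ordinal.{0}, β < omega1 →
        ∃ δ, (β < δ ∧ δ < omega1 ∧ δ ∈ D) ∧ ∃ c ∈ C, β < c ∧ c < δ := by
      intro β hβ
      obtain ⟨c, hcC, hβc⟩ := hC.2.1 β hβ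
      obtain ⟨d, hdD, hcd⟩ := hD.2.1 c (hC.1 hcC)
      exact ⟨d, ⟨hβc.trans hcd, hD.1 hdD, hdD⟩, c, hcC, hβc, hcd⟩
    choose! g hg1 hg2 using step
    set x : ℕ → Ordinal.{0} := fun n => Nat.rec (o+1) (fun _ ih => g ih) n with hxdef
    have hx0 : x 0 = o + 1 := rfl
    have hxs : ∀ n, x (n+1) = g (x n) := fun n => rfl
    have hlt : ∀ n, x n < omega1 := by
      intro n
      induction n with
      | zero => exact succ_lt_omega1' ho
      | succ n ih => rw [hxs]; exact (hg1 (x n) ih).2.1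
    have hs : ∀ n, x n < x (n+1) := fun n => by rw [hxs]; exact (hg1 (x n) (hlt n)).1
    obtain ⟨hsup, hmem, hcof⟩ := sup_seq_facts x hlt hs
    refine ⟨iSup x, ⟨?_, ?_⟩, ?_⟩
    · apply mem_club_of_cofinal hC hsup
      · obtain ⟨c, hcC, h1, h2⟩ := hg2 (x 0) (hlt 0)
        refine ⟨c, hcC, ?_⟩
        have hcx : c < x 1 := h2
        exact hcx.trans (hmem 1)
      · intro β hβ
        obtain ⟨n, hn⟩ := hcof β hβ
        obtain ⟨c, hcC, h1, h2⟩ := hg2 (x n) (hlt n)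
        refine ⟨c, hcC, hn.trans h1, ?_⟩
        have hcx : c < x (n+1) := h2
        exact hcx.trans (hmem (n+1))
    · apply mem_club_of_cofinal hD hsup
      · exact ⟨x 1, (hg1 (x 0) (hlt 0)).2.2, hmem 1⟩
      · intro β hβ
        obtain ⟨n, hn⟩ := hcof β hβ
        exact ⟨x (n+1), (hg1 (x n) (hlt n)).2.2, hn.trans (hs n), hmem (n+1)⟩
    · have h01 : o < x 0 := by rw [hx0]; exact ord_lt_add_one o
      exact h01.trans (hmem 0)
  · intro o ho hne hlub
    obtain ⟨z, hz⟩ := hne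
    have hlubC : IsLUB (C ∩ Set.Iio o) o :=
      ⟨fun w hw => le_of_lt hw.2, fun b hb => hlub.2 fun w hw => hb ⟨hw.1.1, hw.2⟩⟩
    have hlubD : IsLUB (D ∩ Set.Iio o) o :=
      ⟨fun w hw => le_of_lt hw.2, fun b hb => hlub.2 fun w hw => hb ⟨hw.1.2, hw.2⟩⟩
    exact ⟨hC.2.2 o ho ⟨z, hz.1.1, hz.2⟩ hlubC, hD.2.2 o ho ⟨z, hz.1.2, hz.2⟩ hlubD⟩

private def mulClub : Set Ordinal.{0} :=
  {α | α < omega1 ∧ 0 < α ∧ Ordinal.omega0 * α = α}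

private lemma isClubIn_mulClub : IsClubIn mulClub := by
  refine ⟨fun x hx => hx.1, ?_, ?_⟩
  · intro o ho
    set x : ℕ → Ordinal.{0} :=
      fun n => Nat.rec (o+1) (fun _ ih => Ordinal.omega0 * ih + 1) n with hxdef
    have hx0 : x 0 = o + 1 := rfl
    have hxs : ∀ n, x (n+1) = Ordinal.omega0 * x n + 1 := fun n => rfl
    have hlt : ∀ n, x n < omega1 := by
      intro n
      induction n with
      | zero => exact succ_lt_omega1' ho
      | succ n ih =>
        rw [hxs]
        have := omegaMulAdd_lt_omega1 ih 1
        simpa using this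
    have hs : ∀ n, x n < x (n+1) := by
      intro n
      rw [hxs]
      exact lt_of_le_of_lt (Ordinal.le_mul_right (x n) Ordinal.omega0_pos) (ord_lt_add_one _)
    obtain ⟨hsup, hmem, hcof⟩ := sup_seq_facts x hlt hs
    have hpos : 0 < iSup x := lt_of_le_of_lt zero_le (hmem 0)
    have hlim : Order.IsSuccLimit (iSup x) := by
      refine Ordinal.isSuccLimit_iff.mpr ⟨hpos.ne', Order.isSuccPrelimit_of_succ_lt fun a ha => ?_⟩
      obtain ⟨n, hn⟩ := hcof a ha
      exact lt_of_le_of_lt (Order.succ_le_of_lt hn) (hmem n)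
    have hmul : Ordinal.omega0 * iSup x = iSup x := by
      apply le_antisymm
      · rw [Ordinal.mul_le_iff_of_isSuccLimit hlim]
        intro β hβ
        obtain ⟨n, hn⟩ := hcof β hβ
        have hb : Ordinal.omega0 * β < x (n+1) := by
          rw [hxs]
          exact lt_of_le_of_lt (mul_le_mul_right hn.le _) (ord_lt_add_one _)
        exact (hb.trans (hmem (n+1))).le
      · exact Ordinal.le_mul_right _ Ordinal.omega0_pos
    have h01 : o < x 0 := by rw [hx0]; exact ord_lt_add_one o
    exact ⟨iSup x, ⟨hsup, hpos, hmul⟩, h01.trans (hmem 0)⟩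
  · intro o ho hne hlub
    have hcof : ∀ β, β < o → ∃ c ∈ mulClub, β < c ∧ c < o := by
      intro β hβ
      by_contra hcon
      push_neg at hcon
      have hub : β ∈ upperBounds (mulClub ∩ Set.Iio o) := by
        rintro z ⟨hz1, hz2⟩
        by_contra hzb
        push_neg at hzb
        exact absurd (show z < o from hz2) (not_lt.mpr (hcon z hz1 hzb))
      exact absurd (hlub.2 hub) (not_le.mpr hβ)
    have h0 : 0 < o := by
      obtain ⟨z, hz⟩ := hne
      exact lt_of_le_of_lt zero_le hz.2
    have hlim : Order.IsSuccLimit o := by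
      refine Ordinal.isSuccLimit_iff.mpr ⟨h0.ne', Order.isSuccPrelimit_of_succ_lt fun a ha => ?_⟩
      obtain ⟨c, hc, hac, hco⟩ := hcof a ha
      exact lt_of_le_of_lt (Order.succ_le_of_lt hac) hco
    have hmul : Ordinal.omega0 * o = o := by
      apply le_antisymm
      · rw [Ordinal.mul_le_iff_of_isSuccLimit hlim]
        intro β hβ
        obtain ⟨c, hc, hbc, hco⟩ := hcof β hβ
        have : Ordinal.omega0 * β < c := by
          calc Ordinal.omega0 * β < Ordinal.omega0 * c :=
            mul_lt_mul_of_pos_left hbc Ordinal.omega0_pos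
          _ = c := hc.2.2
        exact (this.trans hco).le
      · exact Ordinal.le_mul_right _ Ordinal.omega0_pos
    exact ⟨ho, h0, hmul⟩

/-! ### Special set lemmas -/

private lemma isSpecialSet_mono {T : Type u} [PartialOrder T] {U V : Set T}
    (h : U ⊆ V) (hV : IsSpecialSet V) : IsSpecialSet U := by
  obtain ⟨A, hA, hVA⟩ := hV
  exact ⟨A, hA, h.trans hVA⟩

private lemma isSpecialSet_iUnion {T : Type u} [PartialOrder T] (S : ℕ → Set T)
    (h : ∀ n, IsSpecialSet (S n)) : IsSpecialSet (⋃ n, S n) := by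
  choose A hA hcov using h
  refine ⟨fun k => A (Nat.unpair k).1 (Nat.unpair k).2, fun k => hA _ _, ?_⟩
  intro t ht
  obtain ⟨n, hn⟩ := Set.mem_iUnion.mp ht
  obtain ⟨m, hm⟩ := Set.mem_iUnion.mp (hcov n hn)
  exact Set.mem_iUnion.mpr ⟨Nat.pair n m, by simpa [Nat.unpair_pair] using hm⟩

private lemma isSpecialSet_of_countable {T : Type u} [PartialOrder T] {U : Set T}
    (h : U.Countable) : IsSpecialSet U := by
  rcases U.eq_empty_or_nonempty with rfl | hne
  · exact ⟨fun _ => ∅, fun n => Set.subsingleton_empty.isAntichain _, by simp⟩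
  · obtain ⟨f, hf⟩ := h.exists_eq_range hne
    refine ⟨fun n => {f n}, fun n => Set.subsingleton_singleton.isAntichain _, ?_⟩
    rw [hf]
    rintro t ⟨n, hn⟩
    exact Set.mem_iUnion.mpr ⟨n, by simpa using hn.symm⟩

private lemma isSpecialSet_univ_of_chainInj {T : Type u} [PartialOrder T]
    {ι : Type} [Countable ι] (F : T → ι)
    (hF : ∀ s t : T, s < t → F s ≠ F t) : IsSpecialSet (Set.univ : Set T) := by
  rcases isEmpty_or_nonempty ι with hι | hι
  · refine ⟨fun _ => ∅, fun n => Set.subsingleton_empty.isAntichain _, ?_⟩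
    intro t _
    exact (hι.false (F t)).elim
  · obtain ⟨e, he⟩ := exists_surjective_nat ι
    refine ⟨fun n => {t | F t = e n}, ?_, ?_⟩
    · intro n a ha b hb hne hle
      have hab : a < b := lt_of_le_of_ne hle hne
      exact hF a b hab (ha.trans hb.symm)
    · intro t _
      obtain ⟨n, hn⟩ := he (F t)
      exact Set.mem_iUnion.mpr ⟨n, hn.symm⟩

/-! ### Histories along a regressive map -/

private noncomputable def histAux {T : Type u} (htf : T → Ordinal.{v}) (f : T → T)
    (g : T → T → ℕ) : T → List ℕ :=
  WellFounded.fix (InvImage.wf htf Ordinal.lt_wf)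
    (fun t IH => if h : htf (f t) < htf t then g (f t) t :: IH (f t) h else [])

private lemma histAux_eq {T : Type u} (htf : T → Ordinal.{v}) (f : T → T) (g : T → T → ℕ)
    (t : T) :
    histAux htf f g t =
      if htf (f t) < htf t then g (f t) t :: histAux htf f g (f t) else [] := by
  rw [histAux, WellFounded.fix_eq]
  by_cases h : htf (f t) < htf t
  · rw [dif_pos h, if_pos h]
  · rw [dif_neg h, if_neg h]

private lemma histAux_ne {T : Type u} [PartialOrder T] [OrderBot T]
    (hchain : PredsChain T) (htf : T → Ordinal.{v})
    (hmono : ∀ s t : T, s < t → htf s < htf t)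
    (hbot : htf ⊥ = 0) (f : T → T) (hreg : ∀ t : T, t ≠ ⊥ → f t < t)
    (g : T → T → ℕ)
    (hg : ∀ u s t : T, s < t → f s = u → f t = u → g u s ≠ g u t) :
    ∀ y x : T, x < y → histAux htf f g x ≠ histAux htf f g y := by
  suffices H : ∀ o : Ordinal.{v}, ∀ y, htf y = o → ∀ x, x < y →
      histAux htf f g x ≠ histAux htf f g y by
    intro y x hxy
    exact H (htf y) y rfl x hxy
  intro o
  induction o using Ordinal.induction with
  | _ o IH =>
  rintro y rfl x hxy heq
  have hybot : y ≠ ⊥ := by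
    rintro rfl
    exact absurd hxy (by simp)
  have hfy : f y < y := hreg y hybot
  have hy : htf (f y) < htf y := hmono _ _ hfy
  rw [histAux_eq htf f g y, if_pos hy] at heq
  by_cases hx : x = ⊥
  · subst hx
    have hno : ¬ htf (f (⊥ : T)) < htf (⊥ : T) := by
      rw [hbot]
      exact not_lt_of_ge zero_le
    rw [histAux_eq, if_neg hno] at heq
    exact List.cons_ne_nil _ _ heq.symm
  · have hfx : f x < x := hreg x hx
    have hxh : htf (f x) < htf x := hmono _ _ hfx
    rw [histAux_eq htf f g x, if_pos hxh] at heq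
    injection heq with h1 h2
    by_cases hff : f x = f y
    · rw [hff] at h1
      exact hg (f y) x y hxy hff rfl h1
    · have hcomp : f x ≤ f y ∨ f y ≤ f x :=
        hchain y (show f x ∈ {s : T | s < y} from hfx.trans hxy)
          (show f y ∈ {s : T | s < y} from hfy) hff
      rcases hcomp with hc | hc
      · exact IH (htf (f y)) hy (f y) rfl (f x) (lt_of_le_of_ne hc hff) h2
      · exact IH (htf (f x)) (lt_trans hxh (hmono _ _ hxy)) (f x) rfl (f y)
          (lt_of_le_of_ne hc (Ne.symm hff)) h2.symm

/-! ### NS ideal lemmas -/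

private lemma inNS_mono {T : Type u} [PartialOrder T] [OrderBot T] {B B' : Set T}
    (h : B' ⊆ B) (hB : InNS B) : InNS B' := by
  obtain ⟨f, hreg, hfib⟩ := hB
  refine ⟨f, fun t ht => hreg t (h ht), fun t => isSpecialSet_mono ?_ (hfib t)⟩
  rintro s ⟨hs1, hs2⟩
  exact ⟨h hs1, hs2⟩

private lemma inNS_iUnion {T : Type u} [PartialOrder T] [OrderBot T] (B : ℕ → Set T)
    (h : ∀ n, InNS (B n)) : InNS (⋃ n, B n) := by
  classical
  choose f hreg hfib using h
  have hFd : ∀ (t : T) (h : ∃ n, t ∈ B n),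
      (if h : ∃ n, t ∈ B n then f (Nat.find h) t else ⊥) = f (Nat.find h) t :=
    fun t h => dif_pos h
  refine ⟨fun t => if h : ∃ n, t ∈ B n then f (Nat.find h) t else ⊥, ?_, ?_⟩
  · intro t ht hbot
    have hex : ∃ n, t ∈ B n := Set.mem_iUnion.mp ht
    show (if h : ∃ n, t ∈ B n then f (Nat.find h) t else ⊥) < t
    rw [hFd t hex]
    exact hreg _ t (Nat.find_spec hex) hbot
  · intro u
    apply isSpecialSet_mono (V := ⋃ n, {s | s ∈ B n ∧ f n s = u})
    · rintro s ⟨hs, hsu⟩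
      have hex : ∃ n, s ∈ B n := Set.mem_iUnion.mp hs
      have hsu' : (if h : ∃ n, s ∈ B n then f (Nat.find h) s else ⊥) = u := hsu
      rw [hFd s hex] at hsu'
      exact Set.mem_iUnion.mpr ⟨Nat.find hex, Nat.find_spec hex, hsu'⟩
    · exact isSpecialSet_iUnion _ fun n => hfib n u

private lemma inNS_badLevels {T : Type u} [PartialOrder T] [OrderBot T]
    (htl : T → Ordinal.{0})
    (hlt : ∀ t, htl t < omega1)
    (hpred : ∀ t : T, ∀ o : Ordinal.{0}, o < htl t → ∃ s, s < t ∧ htl s = o)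
    (hlev : ∀ o : Ordinal.{0}, {t : T | htl t = o}.Countable)
    {C : Set Ordinal.{0}} (hC : IsClubIn C) :
    InNS {t : T | htl t ∉ C} := by
  classical
  have hcountBelow : ∀ β : Ordinal.{0}, β < omega1 → {t : T | htl t < β}.Countable := by
    intro β hβ
    have heq : {t : T | htl t < β} = ⋃ o ∈ Set.Iio β, {t : T | htl t = o} := by
      ext t
      simp only [Set.mem_setOf_eq, Set.mem_iUnion, Set.mem_Iio, exists_prop]
      exact ⟨fun h => ⟨htl t, h, rfl⟩, fun ⟨o, ho, he⟩ => he ▸ ho⟩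
    rw [heq]
    exact Set.Countable.biUnion (countable_Iio_of_lt_omega1 hβ) fun o _ => hlev o
  have key : ∀ t : T, htl t ∉ C → (C ∩ Set.Iio (htl t)).Nonempty →
      sSup (C ∩ Set.Iio (htl t)) < htl t := by
    intro t htB hne
    have hbdd : BddAbove (C ∩ Set.Iio (htl t)) := ⟨htl t, fun z hz => le_of_lt hz.2⟩
    have hlub := isLUB_csSup hne hbdd
    have hle : sSup (C ∩ Set.Iio (htl t)) ≤ htl t := csSup_le hne fun z hz => le_of_lt hz.2
    rcases lt_or_eq_of_le hle with hcase | hcase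
    · exact hcase
    · rw [hcase] at hlub
      exact absurd (hC.2.2 (htl t) (hlt t) hne hlub) htB
  choose! pred hpred1 hpred2 using hpred
  have hFd : ∀ (t : T) (h : htl t ∉ C ∧ (C ∩ Set.Iio (htl t)).Nonempty),
      (if _h : htl t ∉ C ∧ (C ∩ Set.Iio (htl t)).Nonempty
        then pred t (sSup (C ∩ Set.Iio (htl t))) else ⊥)
        = pred t (sSup (C ∩ Set.Iio (htl t))) := fun t h => dif_pos h
  have hFd' : ∀ (t : T), ¬(htl t ∉ C ∧ (C ∩ Set.Iio (htl t)).Nonempty) →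
      (if _h : htl t ∉ C ∧ (C ∩ Set.Iio (htl t)).Nonempty
        then pred t (sSup (C ∩ Set.Iio (htl t))) else ⊥) = ⊥ := fun t h => dif_neg h
  refine ⟨fun t => if _h : htl t ∉ C ∧ (C ∩ Set.Iio (htl t)).Nonempty
      then pred t (sSup (C ∩ Set.Iio (htl t))) else ⊥, ?_, ?_⟩
  · intro t htB hbot
    show (if _h : htl t ∉ C ∧ (C ∩ Set.Iio (htl t)).Nonempty
        then pred t (sSup (C ∩ Set.Iio (htl t))) else ⊥) < t
    by_cases h : htl t ∉ C ∧ (C ∩ Set.Iio (htl t)).Nonempty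
    · rw [hFd t h]
      exact hpred1 t _ (key t h.1 h.2)
    · rw [hFd' t h]
      exact Ne.bot_lt hbot
  · intro u
    apply isSpecialSet_of_countable
    obtain ⟨d, hdC, hud⟩ := hC.2.1 (htl u) (hlt u)
    obtain ⟨c0, hc0C, _⟩ := hC.2.1 0 omega1_pos
    have hd1 : d < omega1 := hC.1 hdC
    have hc01 : c0 < omega1 := hC.1 hc0C
    apply Set.Countable.mono _
      (hcountBelow (max d c0 + 1) (succ_lt_omega1' (max_lt hd1 hc01)))
    rintro s ⟨hsB, hsu⟩
    have hsu' : (if _h : htl s ∉ C ∧ (C ∩ Set.Iio (htl s)).Nonempty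
        then pred s (sSup (C ∩ Set.Iio (htl s))) else ⊥) = u := hsu
    by_cases h : htl s ∉ C ∧ (C ∩ Set.Iio (htl s)).Nonempty
    · rw [hFd s h] at hsu'
      have h1 : htl u = sSup (C ∩ Set.Iio (htl s)) := by
        rw [← hsu']
        exact hpred2 s _ (key s h.1 h.2)
      have hsd : htl s ≤ d := by
        by_contra hds
        push_neg at hds
        have hle : d ≤ sSup (C ∩ Set.Iio (htl s)) :=
          le_csSup ⟨htl s, fun z hz => le_of_lt hz.2⟩ ⟨hdC, hds⟩
        rw [← h1] at hle
        exact absurd hle (not_le.mpr hud)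
      exact lt_of_le_of_lt (hsd.trans (le_max_left d c0)) (ord_lt_add_one _)
    · push_neg at h
      have hemp := h hsB
      have hsc : htl s ≤ c0 := by
        by_contra hcs
        push_neg at hcs
        have hmem : c0 ∈ C ∩ Set.Iio (htl s) := ⟨hc0C, hcs⟩
        rw [hemp] at hmem
        exact hmem
      exact lt_of_le_of_lt (hsc.trans (le_max_right d c0)) (ord_lt_add_one _)

private lemma isSpecialSet_univ_of_inNS_univ {T : Type u} [PartialOrder T] [OrderBot T]
    (hchain : PredsChain T) (htf : T → Ordinal.{v})
    (hmono : ∀ s t : T, s < t → htf s < htf t) (hbot : htf ⊥ = 0)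
    (h : InNS (Set.univ : Set T)) : IsSpecialSet (Set.univ : Set T) := by
  classical
  obtain ⟨f, hreg, hfib⟩ := h
  have hcol : ∀ u : T, ∃ g : T → ℕ, ∀ s t : T, s < t → f s = u → f t = u → g s ≠ g t := by
    intro u
    obtain ⟨A, hA, hcov⟩ := hfib u
    refine ⟨fun s => if h : ∃ n, s ∈ A n then Nat.find h else 0, ?_⟩
    intro s t hst hfs hft heq
    have hsm : ∃ n, s ∈ A n := Set.mem_iUnion.mp
      (hcov (show s ∈ {x : T | x ∈ (Set.univ : Set T) ∧ f x = u} from ⟨Set.mem_univ s, hfs⟩))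
    have htm : ∃ n, t ∈ A n := Set.mem_iUnion.mp
      (hcov (show t ∈ {x : T | x ∈ (Set.univ : Set T) ∧ f x = u} from ⟨Set.mem_univ t, hft⟩))
    have heq' : (if h : ∃ n, s ∈ A n then Nat.find h else 0)
        = (if h : ∃ n, t ∈ A n then Nat.find h else 0) := heq
    rw [dif_pos hsm, dif_pos htm] at heq'
    have hin : t ∈ A (Nat.find hsm) := by
      rw [heq']
      exact Nat.find_spec htm
    exact hA (Nat.find hsm) (Nat.find_spec hsm) hin (ne_of_lt hst) hst.le
  choose g hg using hcol
  have hinj : ∀ s t : T, s < t →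
      histAux htf f (fun u s => g u s) s ≠ histAux htf f (fun u s => g u s) t := fun s t hst =>
    histAux_ne hchain htf hmono hbot f (fun t _ht => hreg t trivial _ht) (fun u s => g u s)
      (fun u a b h1 h2 h3 => hg u a b h1 h2 h3) t s hst
  exact isSpecialSet_univ_of_chainInj (histAux htf f (fun u s => g u s)) hinj

end DiamondAux

/-- If `T` is a well-pruned nonspecial `ω₁`-tree, then `◊*` implies `◊_T`. -/
theorem stmt15 {T : Type*} [PartialOrder T] [OrderBot T]
    (hchain : PredsChain T) (ht : T → Ordinal)
    (hht : IsHeightFun ht) (hΩ : HeightOmega1 ht) (hlev : CountableLevels ht)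
    (hns : ¬ IsSpecialSet (Set.univ : Set T))
    (hwp : WellPruned ht)
    (hstar : DiamondStar) :
    DiamondTree T := by
  classical
  -- Transfer heights to `Ordinal.{0}`.
  have hdown : ∀ t : T, ∃ o : Ordinal.{0}, Ordinal.lift.{_,0} o = ht t := by
    intro t
    apply Ordinal.mem_range_lift_of_le
    rw [lift_omega1']
    exact (hΩ.1 t).le
  choose htl hhtl using hdown
  have hmono0 : ∀ s t : T, s < t → htl s < htl t := by
    intro s t hst
    have h2 := hht.1 s t hst
    rwa [← hhtl s, ← hhtl t, Ordinal.lift_lt] at h2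
  have hlt0 : ∀ t : T, htl t < omega1 := by
    intro t
    have h2 := hΩ.1 t
    rwa [← hhtl t, ← lift_omega1', Ordinal.lift_lt] at h2
  have hpred0 : ∀ t : T, ∀ o : Ordinal.{0}, o < htl t → ∃ s, s < t ∧ htl s = o := by
    intro t o ho
    have h2 : Ordinal.lift.{_,0} o < ht t := by
      rw [← hhtl t, Ordinal.lift_lt]
      exact ho
    obtain ⟨s, hs1, hs2⟩ := hht.2 t _ h2
    refine ⟨s, hs1, ?_⟩
    apply Ordinal.lift_inj.mp
    rw [hhtl s, hs2]
  have hlev0 : ∀ o : Ordinal.{0}, {t : T | htl t = o}.Countable := by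
    intro o
    apply Set.Countable.mono _ (hlev (Ordinal.lift.{_,0} o))
    intro t htt
    simp only [Set.mem_setOf_eq] at htt ⊢
    rw [← hhtl t, htt]
  have hht_bot : ht (⊥ : T) = 0 := by
    by_contra hcon
    have h0 : 0 < ht (⊥ : T) := pos_iff_ne_zero.mpr hcon
    obtain ⟨s, hs, _⟩ := hht.2 ⊥ 0 h0
    exact absurd hs (not_lt_bot)
  have hbot0 : htl (⊥ : T) = 0 := by
    have h2 := hhtl (⊥ : T)
    rw [hht_bot] at h2
    have h3 : Ordinal.lift.{_,0} (htl (⊥ : T)) = Ordinal.lift.{_,0} (0 : Ordinal.{0}) := by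
      rw [h2, Ordinal.lift_zero]
    exact Ordinal.lift_inj.mp h3
  -- injective indexing of levels
  have hlevinj : ∀ o : Ordinal.{0}, ∃ F : T → ℕ,
      ∀ s t : T, htl s = o → htl t = o → F s = F t → s = t := by
    intro o
    obtain ⟨f0, hf0⟩ := Set.countable_iff_exists_injective.mp (hlev0 o)
    refine ⟨fun t => if h : htl t = o then f0 ⟨t, h⟩ else 0, ?_⟩
    intro s t hs hts heq
    have heq' : (if h : htl s = o then f0 ⟨s, h⟩ else 0)
        = (if h : htl t = o then f0 ⟨t, h⟩ else 0) := heq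
    rw [dif_pos hs, dif_pos hts] at heq'
    exact congrArg Subtype.val (hf0 heq')
  choose lidx hlidx using hlevinj
  have hidx_inj : ∀ s t : T, htl s = htl t → lidx (htl s) s = lidx (htl t) t → s = t := by
    intro s t h heq
    apply hlidx (htl t) s t h rfl
    calc lidx (htl t) s = lidx (htl s) s := by rw [h]
      _ = lidx (htl t) t := heq
  -- the coding function
  set q : T → ℕ → Ordinal.{0} :=
    fun t n => Ordinal.omega0 * htl t + (Nat.pair (lidx (htl t) t) n : ℕ) with hqdef
  have hqlt : ∀ t n, q t n < omega1 := fun t n => omegaMulAdd_lt_omega1 (hlt0 t) _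
  have hq_inj : ∀ s t : T, ∀ m n : ℕ, q s m = q t n → s = t ∧ m = n := by
    intro s t m n h
    obtain ⟨h1, h2⟩ := omegaMulAdd_inj h
    obtain ⟨h3, h4⟩ := Nat.pair_eq_pair.mp h2
    exact ⟨hidx_inj s t h1 h3, h4⟩
  have hq_closed : ∀ {α : Ordinal.{0}}, Ordinal.omega0 * α = α →
      ∀ t n, htl t < α → q t n < α := by
    intro α hα t n htα
    calc q t n < Ordinal.omega0 * htl t + Ordinal.omega0 :=
        add_lt_add_right (Ordinal.nat_lt_omega0 _) _
      _ = Ordinal.omega0 * (htl t + 1) := by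
          rw [Ordinal.add_one_eq_succ, Ordinal.mul_succ]
      _ ≤ Ordinal.omega0 * α := mul_le_mul_right (ord_add_one_le htα) _
      _ = α := hα
  -- unpack diamond star and enumerate the families
  obtain ⟨Dfam, hDfam, hguess⟩ := hstar
  have hGex : ∀ o : Ordinal.{0}, ∃ G : ℕ → Set Ordinal.{0},
      (Dfam o).Countable → ∀ A ∈ Dfam o, ∃ n, G n = A := by
    intro o
    by_cases h : (Dfam o).Countable ∧ (Dfam o).Nonempty
    · obtain ⟨g, hgr⟩ := h.1.exists_eq_range h.2
      refine ⟨g, fun _ A hA => ?_⟩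
      rw [hgr] at hA
      obtain ⟨n, hn⟩ := hA
      exact ⟨n, hn⟩
    · refine ⟨fun _ => ∅, fun hcnt A hA => ?_⟩
      exact absurd ⟨hcnt, ⟨A, hA⟩⟩ h
  choose G hG using hGex
  -- the candidate diamond sequences
  set Dn : ℕ → T → Set T := fun n t => {s : T | s < t ∧ q s n ∈ G (htl t) n} with hDndef
  by_contra hdia
  have hXex : ∀ n : ℕ, ∃ X : Set T, InNS {t : T | X ∩ Set.Iio t = Dn n t} := by
    intro n
    by_contra hcon
    push_neg at hcon
    exact hdia ⟨Dn n, fun t s hs => hs.1, fun X => hcon X⟩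
  choose X hXNS using hXex
  -- code the sequence of sets into a single subset of ω₁
  set Y : Set Ordinal.{0} := ⋃ n, (fun s => q s n) '' (X n) with hYdef
  have hYsub : Y ⊆ Set.Iio omega1 := by
    rintro y hy
    obtain ⟨n, hn⟩ := Set.mem_iUnion.mp hy
    obtain ⟨s, _, rfl⟩ := hn
    exact hqlt s n
  obtain ⟨CY, hCY, hCYguess⟩ := hguess Y hYsub
  have hCsclub : IsClubIn (CY ∩ mulClub) := isClubIn_inter hCY isClubIn_mulClub
  -- covering claim
  have hcover : ∀ t : T, htl t ∈ CY ∩ mulClub → ∃ n, X n ∩ Set.Iio t = Dn n t := by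
    intro t htmem
    obtain ⟨htCY, htα⟩ := htmem
    have hα1 : htl t < omega1 := htα.1
    have hmul : Ordinal.omega0 * htl t = htl t := htα.2.2
    have hYmem : Y ∩ Set.Iio (htl t) ∈ Dfam (htl t) := hCYguess _ htCY
    obtain ⟨k, hk⟩ := hG (htl t) ((hDfam (htl t) hα1).2) _ hYmem
    refine ⟨k, ?_⟩
    ext s
    simp only [Set.mem_inter_iff, Set.mem_Iio, hDndef, Set.mem_setOf_eq]
    constructor
    · rintro ⟨hsX, hst⟩
      refine ⟨hst, ?_⟩
      rw [hk]
      exact ⟨Set.mem_iUnion.mpr ⟨k, ⟨s, hsX, rfl⟩⟩, hq_closed hmul s k (hmono0 s t hst)⟩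
    · rintro ⟨hst, hsG⟩
      rw [hk] at hsG
      obtain ⟨hsY, _⟩ := hsG
      obtain ⟨n, hn⟩ := Set.mem_iUnion.mp hsY
      obtain ⟨s', hs', heq⟩ := hn
      obtain ⟨hss, hnk⟩ := hq_inj s' s n k heq
      subst hss
      subst hnk
      exact ⟨hs', hst⟩
  -- assemble: the whole tree is in NS^T
  set Bseq : ℕ → Set T := fun n =>
    Nat.rec {t : T | htl t ∉ CY ∩ mulClub}
      (fun m _ => {t : T | X m ∩ Set.Iio t = Dn m t}) n with hBseqdef
  have hInNS : ∀ n, InNS (Bseq n) := by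
    intro n
    cases n with
    | zero => exact inNS_badLevels htl hlt0 hpred0 hlev0 hCsclub
    | succ m => exact hXNS m
  have huniv : (Set.univ : Set T) ⊆ ⋃ n, Bseq n := by
    intro t _
    by_cases h : htl t ∈ CY ∩ mulClub
    · obtain ⟨n, hn⟩ := hcover t h
      exact Set.mem_iUnion.mpr ⟨n+1, hn⟩
    · exact Set.mem_iUnion.mpr ⟨0, h⟩
  have hNSuniv : InNS (Set.univ : Set T) := inNS_mono huniv (inNS_iUnion Bseq hInNS)
  exact hns (isSpecialSet_univ_of_inNS_univ hchain htl hmono0 hbot0 hNSuniv)
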